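/- Let H0, H* ∈ H^stub_s(d) such that M(H0 Δ H*) consists of exactly one minimal alternating cycle C* containing an alternating subtrail (e1, e2, e3) with e1 = {a,b}_{H0,t}, e2 = {b,c}_{H*,t}, e3 = {c,d}_{H0,s} and a ≠ d. If the edge e4 = {a,d}_{H*,s} belongs to C*, then C* = (e1, e2, e3, e4), so |A(H0) Δ A(H*)| = 4, the number of tail-τ edges labeled H0 in M(H0 Δ H*) equals the number of tail-τ edges labeled H*, and H0 and H* are adjacent in G(H^stub_s(d)). -/

import Mathlib

open Finset

/-!
Common setting: fix a vertex set `V` and two tail labels `τ, σ`, encoded as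
`Bool` with `true = τ` and `false = σ`.  A hyperarc is a pair `(t, {a,b})`
consisting of a tail label and an unordered pair of vertices; it is degenerate
if `a = b`.  A hypergraph is a finite set of pairwise distinct non-degenerate
hyperarcs; `H^stub_s(d)` is the set of such hypergraphs realizing the degree
sequence `d` (stub degree of each vertex and number of hyperarcs per tail).
`M(H0 Δ H*)` is the edge-labeled multigraph whose edges record the hyperarcs
of the symmetric difference together with the hypergraph (`lab`, `true = H0`)
containing them and their tail.
-/

/-- Tail labels: `true = τ`, `false = σ`. -/
abbrev Tail := Bool

/-- A hyperarc: a tail label together with an unordered pair of vertices. -/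
abbrev Hyperarc (V : Type*) := Tail × Sym2 V

/-- A (stub) degree sequence: the stub degree of every vertex together with the
number of hyperarcs carrying each tail label. -/
structure DegreeSeq (V : Type*) where
  vdeg : V → ℕ
  tdeg : Tail → ℕ

/-- `A` is a hypergraph in `H^stub_s(d)`: a set of pairwise distinct (this is
automatic for a `Finset`) non-degenerate hyperarcs realizing the degree
sequence `D`. -/
def Realizes {V : Type*} [DecidableEq V] (A : Finset (Hyperarc V)) (D : DegreeSeq V) : Prop :=
  (∀ e ∈ A, ¬ e.2.IsDiag) ∧
  (∀ v : V, (A.filter fun e => v ∈ e.2).card = D.vdeg v) ∧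
  (∀ t : Tail, (A.filter fun e => e.1 = t).card = D.tdeg t)

/-- An edge `{a,b}_{X,t}` of the multigraph `M(H0 Δ H*)`: its label (`true`
means it comes from `H0`, `false` from `H*`), its tail `t` and its endpoints
`{a,b}`. -/
structure MEdge (V : Type*) where
  lab : Bool
  tail : Tail
  ends : Sym2 V
deriving DecidableEq

/-- `M⁻¹`: the hyperarc underlying an edge of `M(H0 Δ H*)`. -/
def MEdge.arc {V : Type*} (e : MEdge V) : Hyperarc V := (e.tail, e.ends)

/-- The edge set of the edge-labeled multigraph `M(H0 Δ H*)`: every hyperarc of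
`A(H0) \ A(H*)` becomes an edge labeled `H0` (i.e. `true`) and every hyperarc of
`A(H*) \ A(H0)` becomes an edge labeled `H*` (i.e. `false`). -/
def mEdges {V : Type*} [DecidableEq V] (A0 A1 : Finset (Hyperarc V)) : Finset (MEdge V) :=
  ((A0 \ A1).image fun h => ⟨true, h.1, h.2⟩) ∪
    ((A1 \ A0).image fun h => ⟨false, h.1, h.2⟩)

/-- An alternating cycle in the edge set `E` of `M(H0 Δ H*)`: a closed trail
(cyclic sequence of pairwise distinct edges, consecutive edges sharing an
endpoint) whose edges alternate between label `H0` and label `H*`. -/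
structure AltCycle {V : Type*} (E : Finset (MEdge V)) where
  /-- the length of the cycle -/
  n : ℕ
  two_le : 2 ≤ n
  /-- the cyclic sequence of edges -/
  edge : ℕ → MEdge V
  /-- the cyclic sequence of vertices visited -/
  vert : ℕ → V
  edge_periodic : ∀ i, edge (i + n) = edge i
  vert_periodic : ∀ i, vert (i + n) = vert i
  mem : ∀ i, edge i ∈ E
  inj : ∀ i < n, ∀ j < n, edge i = edge j → i = j
  ends_eq : ∀ i, (edge i).ends = s(vert i, vert (i + 1))
  alt : ∀ i, (edge i).lab = !(edge (i + 1)).lab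

/-- The set of edges used by an alternating cycle. -/
def AltCycle.edges {V : Type*} [DecidableEq V] {E : Finset (MEdge V)} (C : AltCycle E) :
    Finset (MEdge V) :=
  (Finset.range C.n).image C.edge

/-- A minimal alternating cycle: one containing no proper alternating subcycle. -/
def AltCycle.Minimal {V : Type*} [DecidableEq V] {E : Finset (MEdge V)} (C : AltCycle E) : Prop :=
  ∀ C' : AltCycle E, C'.edges ⊆ C.edges → C'.edges = C.edges

/-- `|f_{X,t}(M(H0 Δ H*))|`: the number of edges of `M(H0 Δ H*)` labeled with
hypergraph `l` (`true = H0`) and tail `t`. -/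
def labTailCount {V : Type*} [DecidableEq V] (A0 A1 : Finset (Hyperarc V))
    (l : Bool) (t : Tail) : ℕ :=
  ((mEdges A0 A1).filter fun e => e.lab = l ∧ e.tail = t).card

/-- `H` and `H'` differ by a single hypershuffle move, i.e. they are adjacent in
`G(H^stub_s(d))`: their symmetric difference consists of 4 hyperarcs,
`M(H Δ H')` is an alternating cycle, and the number of tail-τ edges labeled `H`
equals the number of tail-τ edges labeled `H'`. -/
def HypershuffleAdj {V : Type*} [DecidableEq V] (A0 A1 : Finset (Hyperarc V)) : Prop :=
  ((A0 \ A1) ∪ (A1 \ A0)).card = 4 ∧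
  (∃ C : AltCycle (mEdges A0 A1), C.edges = mEdges A0 A1) ∧
  labTailCount A0 A1 true true = labTailCount A0 A1 false true


section AuxLemmas

variable {V : Type*}

theorem AltCycle.edge_add_mul {E : Finset (MEdge V)} (C : AltCycle E) (k m : ℕ) :
    C.edge (k + m * C.n) = C.edge k := by
  induction m with
  | zero => simp
  | succ m ih => rw [Nat.succ_mul, ← Nat.add_assoc, C.edge_periodic, ih]

theorem AltCycle.edge_mod {E : Finset (MEdge V)} (C : AltCycle E) (k : ℕ) :
    C.edge k = C.edge (k % C.n) := by
  conv_lhs => rw [← Nat.mod_add_div' k C.n]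
  exact C.edge_add_mul _ _

theorem arc_of_mem_mEdges [DecidableEq V] {A0 A1 : Finset (Hyperarc V)} {e : MEdge V}
    (he : e ∈ mEdges A0 A1) :
    (e.lab = true ∧ (e.tail, e.ends) ∈ A0 \ A1) ∨
    (e.lab = false ∧ (e.tail, e.ends) ∈ A1 \ A0) := by
  simp only [mEdges, Finset.mem_union, Finset.mem_image] at he
  rcases he with ⟨h, hh, rfl⟩ | ⟨h, hh, rfl⟩
  · exact Or.inl ⟨rfl, by simpa using hh⟩
  · exact Or.inr ⟨rfl, by simpa using hh⟩

/-- The 4-cycle `(e1, e2, e3, e4)` as an alternating cycle. -/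
def quadCycle [DecidableEq V] {E : Finset (MEdge V)} (a b c d : V) (t s : Tail)
    (h1 : (⟨true, t, s(a, b)⟩ : MEdge V) ∈ E)
    (h2 : (⟨false, t, s(b, c)⟩ : MEdge V) ∈ E)
    (h3 : (⟨true, s, s(c, d)⟩ : MEdge V) ∈ E)
    (h4 : (⟨false, s, s(a, d)⟩ : MEdge V) ∈ E)
    (n13 : (⟨true, t, s(a, b)⟩ : MEdge V) ≠ ⟨true, s, s(c, d)⟩)
    (n24 : (⟨false, t, s(b, c)⟩ : MEdge V) ≠ ⟨false, s, s(a, d)⟩) :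
    AltCycle E where
  n := 4
  two_le := by norm_num
  edge := fun k => if k % 4 = 0 then ⟨true, t, s(a, b)⟩ else if k % 4 = 1 then
    ⟨false, t, s(b, c)⟩ else if k % 4 = 2 then ⟨true, s, s(c, d)⟩ else ⟨false, s, s(a, d)⟩
  vert := fun k => if k % 4 = 0 then a else if k % 4 = 1 then b else if k % 4 = 2 then c else d
  edge_periodic := fun k => by simp [Nat.add_mod_right]
  vert_periodic := fun k => by simp [Nat.add_mod_right]
  mem := fun k => by split_ifs <;> assumption
  inj := by
    have n13' : ¬(t = s ∧ (a = c ∧ b = d ∨ a = d ∧ b = c)) := by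
      rintro ⟨rfl, ⟨rfl, rfl⟩ | ⟨rfl, rfl⟩⟩
      · exact n13 rfl
      · exact n13 (by rw [Sym2.eq_swap])
    have n13'' : ¬(s = t ∧ (c = a ∧ d = b ∨ c = b ∧ d = a)) := by
      rintro ⟨rfl, ⟨rfl, rfl⟩ | ⟨rfl, rfl⟩⟩
      · exact n13 rfl
      · exact n13 (by rw [Sym2.eq_swap])
    have n24' : ¬(t = s ∧ (b = a ∧ c = d ∨ b = d ∧ c = a)) := by
      rintro ⟨rfl, ⟨rfl, rfl⟩ | ⟨rfl, rfl⟩⟩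
      · exact n24 rfl
      · exact n24 (by rw [Sym2.eq_swap])
    have n24'' : ¬(s = t ∧ (a = b ∧ d = c ∨ a = c ∧ d = b)) := by
      rintro ⟨rfl, ⟨rfl, rfl⟩ | ⟨rfl, rfl⟩⟩
      · exact n24 rfl
      · exact n24 (by rw [Sym2.eq_swap])
    intro x hx y hy hxy
    interval_cases x <;> interval_cases y <;>
      norm_num [MEdge.mk.injEq, Sym2.eq_iff] at hxy <;>
      first
        | rfl
        | exact absurd hxy n13'
        | exact absurd hxy n13''
        | exact absurd hxy n24'
        | exact absurd hxy n24''
  ends_eq := by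
    intro k
    rcases (by omega : k % 4 = 0 ∨ k % 4 = 1 ∨ k % 4 = 2 ∨ k % 4 = 3) with hk | hk | hk | hk
    · have hk1 : (k + 1) % 4 = 1 := by omega
      simp [hk, hk1]
    · have hk1 : (k + 1) % 4 = 2 := by omega
      simp [hk, hk1]
    · have hk1 : (k + 1) % 4 = 3 := by omega
      simp [hk, hk1]
    · have hk1 : (k + 1) % 4 = 0 := by omega
      simp [hk, hk1, Sym2.eq_swap]
  alt := by
    intro k
    rcases (by omega : k % 4 = 0 ∨ k % 4 = 1 ∨ k % 4 = 2 ∨ k % 4 = 3) with hk | hk | hk | hk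
    · have hk1 : (k + 1) % 4 = 1 := by omega
      simp [hk, hk1]
    · have hk1 : (k + 1) % 4 = 2 := by omega
      simp [hk, hk1]
    · have hk1 : (k + 1) % 4 = 3 := by omega
      simp [hk, hk1]
    · have hk1 : (k + 1) % 4 = 0 := by omega
      simp [hk, hk1]

theorem quadCycle_edges [DecidableEq V] {E : Finset (MEdge V)} (a b c d : V) (t s : Tail)
    (h1 : (⟨true, t, s(a, b)⟩ : MEdge V) ∈ E)
    (h2 : (⟨false, t, s(b, c)⟩ : MEdge V) ∈ E)
    (h3 : (⟨true, s, s(c, d)⟩ : MEdge V) ∈ E)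
    (h4 : (⟨false, s, s(a, d)⟩ : MEdge V) ∈ E)
    (n13 : (⟨true, t, s(a, b)⟩ : MEdge V) ≠ ⟨true, s, s(c, d)⟩)
    (n24 : (⟨false, t, s(b, c)⟩ : MEdge V) ≠ ⟨false, s, s(a, d)⟩) :
    (quadCycle a b c d t s h1 h2 h3 h4 n13 n24).edges =
      {⟨true, t, s(a, b)⟩, ⟨false, t, s(b, c)⟩, ⟨true, s, s(c, d)⟩, ⟨false, s, s(a, d)⟩} := by
  have hr : Finset.range 4 = {0, 1, 2, 3} := by decide
  unfold AltCycle.edges quadCycle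
  rw [hr]
  simp [Finset.image_insert]

end AuxLemmas

/-- Case 3 of the proof of Lemma `connected_when_one_cycle`.
`M(H0 Δ H*)` is exactly one minimal alternating cycle `C*` with subtrail
`(e1, e2, e3)`, `e1 = {a,b}_{H0,t}`, `e2 = {b,c}_{H*,t}`, `e3 = {c,d}_{H0,s}`,
`a ≠ d`.  If `e4 = {a,d}_{H*,s}` belongs to `C*`, then
`C* = (e1, e2, e3, e4)`, so `|A(H0) Δ A(H*)| = 4`, the numbers of tail-τ edges
labeled `H0` and labeled `H*` agree, and `H0`, `H*` are adjacent in
`G(H^stub_s(d))`. -/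
theorem one_cycle_case3 {V : Type*} [DecidableEq V]
    (D : DegreeSeq V) (A0 A1 : Finset (Hyperarc V))
    (h0 : Realizes A0 D) (h1 : Realizes A1 D)
    (C : AltCycle (mEdges A0 A1)) (hmin : C.Minimal) (hall : C.edges = mEdges A0 A1)
    (a b c d : V) (t s : Tail) (i : ℕ)
    (he1 : C.edge i = ⟨true, t, s(a, b)⟩)
    (he2 : C.edge (i + 1) = ⟨false, t, s(b, c)⟩)
    (he3 : C.edge (i + 2) = ⟨true, s, s(c, d)⟩)
    (had : a ≠ d)
    (he4 : (⟨false, s, s(a, d)⟩ : MEdge V) ∈ C.edges) :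
    C.edges = {⟨true, t, s(a, b)⟩, ⟨false, t, s(b, c)⟩,
               ⟨true, s, s(c, d)⟩, ⟨false, s, s(a, d)⟩} ∧
    ((A0 \ A1) ∪ (A1 \ A0)).card = 4 ∧
    labTailCount A0 A1 true true = labTailCount A0 A1 false true ∧
    HypershuffleAdj A0 A1 := by
  classical
  have h2n := C.two_le
  have hm1 : (⟨true, t, s(a, b)⟩ : MEdge V) ∈ mEdges A0 A1 := he1 ▸ C.mem i
  have hm2 : (⟨false, t, s(b, c)⟩ : MEdge V) ∈ mEdges A0 A1 := he2 ▸ C.mem (i + 1)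
  have hm3 : (⟨true, s, s(c, d)⟩ : MEdge V) ∈ mEdges A0 A1 := he3 ▸ C.mem (i + 2)
  have hm4 : (⟨false, s, s(a, d)⟩ : MEdge V) ∈ mEdges A0 A1 := by rwa [hall] at he4
  have ha1 : (t, s(a, b)) ∈ A0 \ A1 := by
    rcases arc_of_mem_mEdges hm1 with ⟨-, h⟩ | ⟨h, -⟩
    · exact h
    · simp at h
  have ha2 : (t, s(b, c)) ∈ A1 \ A0 := by
    rcases arc_of_mem_mEdges hm2 with ⟨h, -⟩ | ⟨-, h⟩
    · simp at h
    · exact h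
  have hab : a ≠ b := by
    have := h0.1 _ (Finset.mem_sdiff.mp ha1).1
    simpa [Sym2.mk_isDiag_iff] using this
  have ne13 : (⟨true, t, s(a, b)⟩ : MEdge V) ≠ ⟨true, s, s(c, d)⟩ := by
    intro h
    have heq : C.edge (i % C.n) = C.edge ((i + 2) % C.n) := by
      rw [← C.edge_mod, ← C.edge_mod, he1, he3]
      exact h
    have hmod : i % C.n = (i + 2) % C.n :=
      C.inj _ (Nat.mod_lt _ (by omega)) _ (Nat.mod_lt _ (by omega)) heq
    have hdvd : C.n ∣ (i + 2) - i := (Nat.modEq_iff_dvd' (Nat.le_add_right i 2)).mp hmod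
    have hdvd2 : C.n ∣ 2 := by simpa using hdvd
    have hn2 : C.n = 2 := le_antisymm (Nat.le_of_dvd (by norm_num) hdvd2) C.two_le
    have hv : C.vert (i + 2) = C.vert i := by
      have := C.vert_periodic i
      rwa [hn2] at this
    have hends1 : s(a, b) = s(C.vert i, C.vert (i + 1)) := by
      have := C.ends_eq i
      rwa [he1] at this
    have hends2 : s(b, c) = s(C.vert (i + 1), C.vert i) := by
      have := C.ends_eq (i + 1)
      rw [he2] at this
      rwa [hv] at this
    have hbcab : s(b, c) = s(a, b) := by rw [hends2, Sym2.eq_swap, ← hends1]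
    have h1' := Finset.mem_sdiff.mp ha1
    have h2' := Finset.mem_sdiff.mp ha2
    rw [hbcab] at h2'
    exact h2'.2 h1'.1
  have ne24 : (⟨false, t, s(b, c)⟩ : MEdge V) ≠ ⟨false, s, s(a, d)⟩ := by
    intro h
    rw [MEdge.mk.injEq] at h
    obtain ⟨-, hts, hbc'⟩ := h
    rw [Sym2.eq_iff] at hbc'
    rcases hbc' with ⟨hba, -⟩ | ⟨hbd, hca⟩
    · exact hab hba.symm
    · subst hca
      subst hbd
      subst hts
      exact ne13 rfl
  have hsub : (quadCycle a b c d t s hm1 hm2 hm3 hm4 ne13 ne24).edges ⊆ C.edges := by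
    rw [quadCycle_edges, hall]
    intro e he
    simp only [Finset.mem_insert, Finset.mem_singleton] at he
    rcases he with rfl | rfl | rfl | rfl <;> assumption
  have hCS : C.edges = {⟨true, t, s(a, b)⟩, ⟨false, t, s(b, c)⟩,
      ⟨true, s, s(c, d)⟩, ⟨false, s, s(a, d)⟩} := by
    rw [← hmin _ hsub, quadCycle_edges]
  have hme : mEdges A0 A1 = {⟨true, t, s(a, b)⟩, ⟨false, t, s(b, c)⟩,
      ⟨true, s, s(c, d)⟩, ⟨false, s, s(a, d)⟩} := hall.symm.trans hCS
  have hne12 : (⟨true, t, s(a, b)⟩ : MEdge V) ≠ ⟨false, t, s(b, c)⟩ := by simp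
  have hne14 : (⟨true, t, s(a, b)⟩ : MEdge V) ≠ ⟨false, s, s(a, d)⟩ := by simp
  have hne23 : (⟨false, t, s(b, c)⟩ : MEdge V) ≠ ⟨true, s, s(c, d)⟩ := by simp
  have hne34 : (⟨true, s, s(c, d)⟩ : MEdge V) ≠ ⟨false, s, s(a, d)⟩ := by simp
  have hcardS : ({⟨true, t, s(a, b)⟩, ⟨false, t, s(b, c)⟩,
      ⟨true, s, s(c, d)⟩, ⟨false, s, s(a, d)⟩} : Finset (MEdge V)).card = 4 := by
    rw [Finset.card_insert_of_notMem (by simp [hne12, ne13, hne14]),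
      Finset.card_insert_of_notMem (by simp [hne23, ne24]),
      Finset.card_insert_of_notMem (by simp [hne34]), Finset.card_singleton]
  have hdisj : Disjoint ((A0 \ A1).image fun h => (⟨true, h.1, h.2⟩ : MEdge V))
      ((A1 \ A0).image fun h => (⟨false, h.1, h.2⟩ : MEdge V)) := by
    simp only [Finset.disjoint_left, Finset.mem_image]
    rintro e ⟨x, -, rfl⟩ ⟨y, -, hy⟩
    simp at hy
  have hinj : ∀ l : Bool, Function.Injective fun h : Hyperarc V => (⟨l, h.1, h.2⟩ : MEdge V) := by
    intro l x y hxy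
    simp only [MEdge.mk.injEq, true_and] at hxy
    cases x
    cases y
    simp_all
  have hcard4 : ((A0 \ A1) ∪ (A1 \ A0)).card = 4 := by
    rw [Finset.card_union_of_disjoint disjoint_sdiff_sdiff]
    have hmc : (mEdges A0 A1).card = (A0 \ A1).card + (A1 \ A0).card := by
      rw [mEdges, Finset.card_union_of_disjoint hdisj,
        Finset.card_image_of_injective _ (hinj true), Finset.card_image_of_injective _ (hinj false)]
    rw [← hmc, hme, hcardS]
  have hcount : labTailCount A0 A1 true true = labTailCount A0 A1 false true := by
    unfold labTailCount
    rw [hme]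
    cases t <;> cases s
    · simp [Finset.filter_insert, Finset.filter_singleton]
    · simp [Finset.filter_insert, Finset.filter_singleton]
    · simp [Finset.filter_insert, Finset.filter_singleton]
    · simp only [Finset.filter_insert, Finset.filter_singleton]
      norm_num
      rw [Finset.card_insert_of_notMem (by simp [ne13]),
        Finset.card_insert_of_notMem (by simp [ne24])]
      simp
  exact ⟨hCS, hcard4, hcount, hcard4, ⟨C, hall⟩, hcount⟩
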